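/- arXiv:1708.09052 — 2 statements merged into one kernel-verified Lean document; each statement's English description precedes it below -/
import Mathlib

section
/- If f is holomorphic with nonvanishing derivative and q = S(f) is its Schwarzian derivative, then for every polynomial P of degree at most 2, the function (P∘f)/f' satisfies Λ_q((P∘f)/f') = 0. -/
set_option maxHeartbeats 1000000

/-- The third-order operator `Λ_q(F) = F''' + 2 q F' + q' F`. -/
noncomputable def Lambda (q F : ℂ → ℂ) (z : ℂ) : ℂ :=
  deriv (deriv (deriv F)) z + 2 * q z * deriv F z + deriv q z * F z

/-- The Schwarzian derivative `S(f) = f'''/f' - (3/2)(f''/f')²`. -/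
noncomputable def schwarzian (f : ℂ → ℂ) (z : ℂ) : ℂ :=
  deriv (deriv (deriv f)) z / deriv f z - (3/2) * (deriv (deriv f) z / deriv f z) ^ 2

theorem key_aux (f g1 g2 g3 g4 : ℂ → ℂ) (a b c : ℂ)
    (h0 : ∀ w : ℂ, HasDerivAt f (g1 w) w) (h1 : ∀ w : ℂ, HasDerivAt g1 (g2 w) w)
    (h2 : ∀ w : ℂ, HasDerivAt g2 (g3 w) w) (h3 : ∀ w : ℂ, HasDerivAt g3 (g4 w) w)
    (hne : ∀ w : ℂ, g1 w ≠ 0) (z : ℂ) :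
    Lambda (schwarzian f) (fun w => (a * (f w) ^ 2 + b * f w + c) / deriv f w) z = 0 := by
  have e1 : deriv f = g1 := funext fun w => (h0 w).deriv
  have e2 : deriv g1 = g2 := funext fun w => (h1 w).deriv
  have e3 : deriv g2 = g3 := funext fun w => (h2 w).deriv
  have hN1 : ∀ w : ℂ, HasDerivAt (fun w => ((-1 : ℂ) * c) * g2 w ^ 1 + ((1 : ℂ) * b) * g1 w ^ 2 + ((-1 : ℂ) * b) * f w ^ 1 * g2 w ^ 1 + ((2 : ℂ) * a) * f w ^ 1 * g1 w ^ 2 + ((-1 : ℂ) * a) * f w ^ 2 * g2 w ^ 1) (((-1 : ℂ) * c) * g3 w ^ 1 + ((1 : ℂ) * b) * g1 w ^ 1 * g2 w ^ 1 + ((-1 : ℂ) * b) * f w ^ 1 * g3 w ^ 1 + ((2 : ℂ) * a) * g1 w ^ 3 + ((2 : ℂ) * a) * f w ^ 1 * g1 w ^ 1 * g2 w ^ 1 + ((-1 : ℂ) * a) * f w ^ 2 * g3 w ^ 1) w := by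
    intro w
    exact (((((((hasDerivAt_const w ((-1 : ℂ) * c)).mul ((h2 w).pow 1))).add ((hasDerivAt_const w ((1 : ℂ) * b)).mul ((h1 w).pow 2))).add (((hasDerivAt_const w ((-1 : ℂ) * b)).mul ((h0 w).pow 1)).mul ((h2 w).pow 1))).add (((hasDerivAt_const w ((2 : ℂ) * a)).mul ((h0 w).pow 1)).mul ((h1 w).pow 2))).add (((hasDerivAt_const w ((-1 : ℂ) * a)).mul ((h0 w).pow 2)).mul ((h2 w).pow 1))).congr_deriv (by simp only [Pi.mul_apply, Pi.pow_apply]; push_cast; ring)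
  have hN2 : ∀ w : ℂ, HasDerivAt (fun w => ((2 : ℂ) * c) * g2 w ^ 2 + ((-1 : ℂ) * c) * g1 w ^ 1 * g3 w ^ 1 + ((-1 : ℂ) * b) * g1 w ^ 2 * g2 w ^ 1 + ((2 : ℂ) * b) * f w ^ 1 * g2 w ^ 2 + ((-1 : ℂ) * b) * f w ^ 1 * g1 w ^ 1 * g3 w ^ 1 + ((2 : ℂ) * a) * g1 w ^ 4 + ((-2 : ℂ) * a) * f w ^ 1 * g1 w ^ 2 * g2 w ^ 1 + ((2 : ℂ) * a) * f w ^ 2 * g2 w ^ 2 + ((-1 : ℂ) * a) * f w ^ 2 * g1 w ^ 1 * g3 w ^ 1) (((3 : ℂ) * c) * g2 w ^ 1 * g3 w ^ 1 + ((-1 : ℂ) * c) * g1 w ^ 1 * g4 w ^ 1 + ((-2 : ℂ) * b) * g1 w ^ 2 * g3 w ^ 1 + ((3 : ℂ) * b) * f w ^ 1 * g2 w ^ 1 * g3 w ^ 1 + ((-1 : ℂ) * b) * f w ^ 1 * g1 w ^ 1 * g4 w ^ 1 + ((6 : ℂ) * a) * g1 w ^ 3 * g2 w ^ 1 + ((-4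 : ℂ) * a) * f w ^ 1 * g1 w ^ 2 * g3 w ^ 1 + ((3 : ℂ) * a) * f w ^ 2 * g2 w ^ 1 * g3 w ^ 1 + ((-1 : ℂ) * a) * f w ^ 2 * g1 w ^ 1 * g4 w ^ 1) w := by
    intro w
    exact (((((((((((hasDerivAt_const w ((2 : ℂ) * c)).mul ((h2 w).pow 2))).add (((hasDerivAt_const w ((-1 : ℂ) * c)).mul ((h1 w).pow 1)).mul ((h3 w).pow 1))).add (((hasDerivAt_const w ((-1 : ℂ) * b)).mul ((h1 w).pow 2)).mul ((h2 w).pow 1))).add (((hasDerivAt_const w ((2 : ℂ) * b)).mul ((h0 w).pow 1)).mul ((h2 w).pow 2))).add ((((hasDerivAt_const w ((-1 : ℂ) * b)).mul ((h0 w).pow 1)).mul ((h1 w).pow 1)).mul ((h3 w).pow 1))).add ((hasDerivAt_const w ((2 : ℂ) * a)).mul ((h1 w).pow 4))).add ((((hasDerivAt_const w ((-2 : ℂ) * a)).mul ((h0 w).pow 1)).mul ((h1 w).pow 2)).mul ((h2 w).pow 1))).add (((hasDerivAt_const w ((2 : ℂ) * a)).mul ((h0 w).pow 2)).mul ((h2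 w).pow 2))).add ((((hasDerivAt_const w ((-1 : ℂ) * a)).mul ((h0 w).pow 2)).mul ((h1 w).pow 1)).mul ((h3 w).pow 1))).congr_deriv (by simp only [Pi.mul_apply, Pi.pow_apply]; push_cast; ring)
  have hQn : ∀ w : ℂ, HasDerivAt (fun w => ((-3/2 : ℂ)) * g2 w ^ 2 + ((1 : ℂ)) * g1 w ^ 1 * g3 w ^ 1) (((-2 : ℂ)) * g2 w ^ 1 * g3 w ^ 1 + ((1 : ℂ)) * g1 w ^ 1 * g4 w ^ 1) w := by
    intro w
    exact ((((hasDerivAt_const w ((-3/2 : ℂ))).mul ((h2 w).pow 2))).add (((hasDerivAt_const w ((1 : ℂ))).mul ((h1 w).pow 1)).mul ((h3 w).pow 1))).congr_deriv (by simp only [Pi.mul_apply, Pi.pow_apply]; push_cast; ring)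

  have hA1 : ∀ w : ℂ, HasDerivAt (fun w => (a * (f w) ^ 2 + b * f w + c) / g1 w)
      ((((-1 : ℂ) * c) * g2 w ^ 1 + ((1 : ℂ) * b) * g1 w ^ 2 + ((-1 : ℂ) * b) * f w ^ 1 * g2 w ^ 1 + ((2 : ℂ) * a) * f w ^ 1 * g1 w ^ 2 + ((-1 : ℂ) * a) * f w ^ 2 * g2 w ^ 1) / g1 w ^ 2) w := by
    intro w
    have hnum : HasDerivAt (fun w => a * (f w) ^ 2 + b * f w + c) (((1 : ℂ) * b) * g1 w ^ 1 + ((2 : ℂ) * a) * f w ^ 1 * g1 w ^ 1) w := by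
      exact (((((h0 w).pow 2).const_mul a).add ((h0 w).const_mul b)).add_const c).congr_deriv
        (by push_cast; ring)
    exact (hnum.div (h1 w) (hne w)).congr_deriv (by field_simp [hne w]; ring)
  have hA2 : ∀ w : ℂ, HasDerivAt (fun w => (((-1 : ℂ) * c) * g2 w ^ 1 + ((1 : ℂ) * b) * g1 w ^ 2 + ((-1 : ℂ) * b) * f w ^ 1 * g2 w ^ 1 + ((2 : ℂ) * a) * f w ^ 1 * g1 w ^ 2 + ((-1 : ℂ) * a) * f w ^ 2 * g2 w ^ 1) / g1 w ^ 2)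
      ((((2 : ℂ) * c) * g2 w ^ 2 + ((-1 : ℂ) * c) * g1 w ^ 1 * g3 w ^ 1 + ((-1 : ℂ) * b) * g1 w ^ 2 * g2 w ^ 1 + ((2 : ℂ) * b) * f w ^ 1 * g2 w ^ 2 + ((-1 : ℂ) * b) * f w ^ 1 * g1 w ^ 1 * g3 w ^ 1 + ((2 : ℂ) * a) * g1 w ^ 4 + ((-2 : ℂ) * a) * f w ^ 1 * g1 w ^ 2 * g2 w ^ 1 + ((2 : ℂ) * a) * f w ^ 2 * g2 w ^ 2 + ((-1 : ℂ) * a) * f w ^ 2 * g1 w ^ 1 * g3 w ^ 1) / g1 w ^ 3) w := by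
    intro w
    exact ((hN1 w).div ((h1 w).pow 2) (pow_ne_zero 2 (hne w))).congr_deriv
      (by simp only [Pi.mul_apply, Pi.pow_apply]; push_cast; field_simp [hne w]; ring)
  have hA3 : ∀ w : ℂ, HasDerivAt (fun w => (((2 : ℂ) * c) * g2 w ^ 2 + ((-1 : ℂ) * c) * g1 w ^ 1 * g3 w ^ 1 + ((-1 : ℂ) * b) * g1 w ^ 2 * g2 w ^ 1 + ((2 : ℂ) * b) * f w ^ 1 * g2 w ^ 2 + ((-1 : ℂ) * b) * f w ^ 1 * g1 w ^ 1 * g3 w ^ 1 + ((2 : ℂ) * a) * g1 w ^ 4 + ((-2 : ℂ) * a) * f w ^ 1 * g1 w ^ 2 * g2 w ^ 1 + ((2 : ℂ) * a) * f w ^ 2 * g2 w ^ 2 + ((-1 : ℂ) * a) * f w ^ 2 * g1 w ^ 1 * g3 w ^ 1) / g1 w ^ 3)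
      ((((-6 : ℂ) * c) * g2 w ^ 3 + ((6 : ℂ) * c) * g1 w ^ 1 * g2 w ^ 1 * g3 w ^ 1 + ((-1 : ℂ) * c) * g1 w ^ 2 * g4 w ^ 1 + ((3 : ℂ) * b) * g1 w ^ 2 * g2 w ^ 2 + ((-2 : ℂ) * b) * g1 w ^ 3 * g3 w ^ 1 + ((-6 : ℂ) * b) * f w ^ 1 * g2 w ^ 3 + ((6 : ℂ) * b) * f w ^ 1 * g1 w ^ 1 * g2 w ^ 1 * g3 w ^ 1 + ((-1 : ℂ) * b) * f w ^ 1 * g1 w ^ 2 * g4 w ^ 1 + ((6 : ℂ) * a) * f w ^ 1 * g1 w ^ 2 * g2 w ^ 2 + ((-4 : ℂ) * a) * f w ^ 1 * g1 w ^ 3 * g3 w ^ 1 + ((-6 : ℂ) * a) * f w ^ 2 * g2 w ^ 3 + ((6 : ℂ) * a) * f w ^ 2 * g1 w ^ 1 * g2 w ^ 1 * g3 w ^ 1 + ((-1 : ℂ) * a) * f w ^ 2 * g1 w ^ 2 * g4 w ^ 1) / g1 w ^ 4) w := by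
    intro w
    exact ((hN2 w).div ((h1 w).pow 3) (pow_ne_zero 3 (hne w))).congr_deriv
      (by simp only [Pi.mul_apply, Pi.pow_apply]; push_cast; field_simp [hne w]; ring)
  have hq : schwarzian f = fun w => (((-3/2 : ℂ)) * g2 w ^ 2 + ((1 : ℂ)) * g1 w ^ 1 * g3 w ^ 1) / g1 w ^ 2 := by
    funext w
    simp only [schwarzian, e1, e2, e3]
    rw [div_pow]
    field_simp [hne w]
    ring
  have hQ1 : ∀ w : ℂ, HasDerivAt (fun w => (((-3/2 : ℂ)) * g2 w ^ 2 + ((1 : ℂ)) * g1 w ^ 1 * g3 w ^ 1) / g1 w ^ 2)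
      ((((3 : ℂ)) * g2 w ^ 3 + ((-4 : ℂ)) * g1 w ^ 1 * g2 w ^ 1 * g3 w ^ 1 + ((1 : ℂ)) * g1 w ^ 2 * g4 w ^ 1) / g1 w ^ 3) w := by
    intro w
    exact ((hQn w).div ((h1 w).pow 2) (pow_ne_zero 2 (hne w))).congr_deriv
      (by simp only [Pi.mul_apply, Pi.pow_apply]; push_cast; field_simp [hne w]; ring)
  have eF : (fun w => (a * (f w) ^ 2 + b * f w + c) / deriv f w)
      = fun w => (a * (f w) ^ 2 + b * f w + c) / g1 w := by rw [e1]
  have eF1 : deriv (fun w => (a * (f w) ^ 2 + b * f w + c) / g1 w)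
      = fun w => (((-1 : ℂ) * c) * g2 w ^ 1 + ((1 : ℂ) * b) * g1 w ^ 2 + ((-1 : ℂ) * b) * f w ^ 1 * g2 w ^ 1 + ((2 : ℂ) * a) * f w ^ 1 * g1 w ^ 2 + ((-1 : ℂ) * a) * f w ^ 2 * g2 w ^ 1) / g1 w ^ 2 := funext fun w => (hA1 w).deriv
  have eF2 : deriv (fun w => (((-1 : ℂ) * c) * g2 w ^ 1 + ((1 : ℂ) * b) * g1 w ^ 2 + ((-1 : ℂ) * b) * f w ^ 1 * g2 w ^ 1 + ((2 : ℂ) * a) * f w ^ 1 * g1 w ^ 2 + ((-1 : ℂ) * a) * f w ^ 2 * g2 w ^ 1) / g1 w ^ 2)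
      = fun w => (((2 : ℂ) * c) * g2 w ^ 2 + ((-1 : ℂ) * c) * g1 w ^ 1 * g3 w ^ 1 + ((-1 : ℂ) * b) * g1 w ^ 2 * g2 w ^ 1 + ((2 : ℂ) * b) * f w ^ 1 * g2 w ^ 2 + ((-1 : ℂ) * b) * f w ^ 1 * g1 w ^ 1 * g3 w ^ 1 + ((2 : ℂ) * a) * g1 w ^ 4 + ((-2 : ℂ) * a) * f w ^ 1 * g1 w ^ 2 * g2 w ^ 1 + ((2 : ℂ) * a) * f w ^ 2 * g2 w ^ 2 + ((-1 : ℂ) * a) * f w ^ 2 * g1 w ^ 1 * g3 w ^ 1) / g1 w ^ 3 := funext fun w => (hA2 w).deriv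
  rw [Lambda, eF, eF1, eF2, hq]
  rw [(hA3 z).deriv, (hQ1 z).deriv]
  simp only [e1]
  field_simp [hne z]
  ring

/-- If `q = S(f)` then `Λ_q((P ∘ f)/f') = 0` for every quadratic polynomial `P`. -/
theorem lambda_kernel_quadratic (f : ℂ → ℂ) (hf : Differentiable ℂ f)
    (hf' : ∀ z, deriv f z ≠ 0) (a b c : ℂ) :
    ∀ z, Lambda (schwarzian f)
      (fun w => (a * (f w) ^ 2 + b * f w + c) / deriv f w) z = 0 := by
  intro z
  have hA : AnalyticOnNhd ℂ f Set.univ := fun w _ => hf.analyticAt w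
  have hA1 : AnalyticOnNhd ℂ (deriv f) Set.univ := hA.deriv
  have hA2 : AnalyticOnNhd ℂ (deriv (deriv f)) Set.univ := hA1.deriv
  have hA3 : AnalyticOnNhd ℂ (deriv (deriv (deriv f))) Set.univ := hA2.deriv
  exact key_aux f (deriv f) (deriv (deriv f)) (deriv (deriv (deriv f)))
    (deriv (deriv (deriv (deriv f)))) a b c
    (fun w => (hf w).hasDerivAt)
    (fun w => ((hA1 w trivial).differentiableAt).hasDerivAt)
    (fun w => ((hA2 w trivial).differentiableAt).hasDerivAt)
    (fun w => ((hA3 w trivial).differentiableAt).hasDerivAt)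
    hf' z
end

section
/- If h satisfies Λ_0(h) = h''' = p and f is holomorphic with nonvanishing derivative, then H = (h∘f)/f' satisfies Λ_q(H) = P, where q = S(f) is the Schwarzian derivative of f and P = (p∘f)·(f')². -/
lemma derivDiff {f : ℂ → ℂ} (hf : Differentiable ℂ f) : Differentiable ℂ (deriv f) :=
  ((contDiff_infty_iff_deriv.mp hf.contDiff).2).differentiable (by simp)

set_option maxHeartbeats 1000000

/-- If `h''' = p` and `H = (h ∘ f)/f'`, then `Λ_{S(f)}(H) = (p ∘ f)·(f')²`. -/
theorem lambda_conjugation (f h p : ℂ → ℂ)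
    (hf : Differentiable ℂ f) (hf' : ∀ z, deriv f z ≠ 0)
    (hh : Differentiable ℂ h)
    (hp : ∀ w, deriv (deriv (deriv h)) w = p w) :
    ∀ z, Lambda (schwarzian f) (fun w => h (f w) / deriv f w) z
      = p (f z) * (deriv f z) ^ 2 := by
  have hf1 : Differentiable ℂ (deriv f) := derivDiff hf
  have hf2 : Differentiable ℂ (deriv (deriv f)) := derivDiff hf1
  have hf3 : Differentiable ℂ (deriv (deriv (deriv f))) := derivDiff hf2
  have hh1 : Differentiable ℂ (deriv h) := derivDiff hh
  have hh2 : Differentiable ℂ (deriv (deriv h)) := derivDiff hh1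
  -- First derivative
  have hHA : ∀ z, HasDerivAt (fun w => h (f w) / deriv f w)
      (deriv h (f z) - h (f z) * deriv (deriv f) z / (deriv f z) ^ 2) z := by
    intro z
    have t := (((hh (f z)).hasDerivAt.comp z (hf z).hasDerivAt).div
      ((hf1 z).hasDerivAt) (hf' z))
    refine t.congr_deriv ?_
    simp only [Function.comp_apply, Pi.mul_apply, Pi.pow_apply, Pi.div_apply]
    field_simp [hf' z]
  have derivA : deriv (fun w => h (f w) / deriv f w)
      = fun w => deriv h (f w) - h (f w) * deriv (deriv f) w / (deriv f w) ^ 2 :=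
    funext fun z => (hHA z).deriv
  -- Second derivative
  have hAB : ∀ z, HasDerivAt
      (fun w => deriv h (f w) - h (f w) * deriv (deriv f) w / (deriv f w) ^ 2)
      (deriv (deriv h) (f z) * deriv f z
        - deriv h (f z) * deriv (deriv f) z / deriv f z
        - h (f z) * deriv (deriv (deriv f)) z / (deriv f z) ^ 2
        + 2 * h (f z) * (deriv (deriv f) z) ^ 2 / (deriv f z) ^ 3) z := by
    intro z
    have t1 : HasDerivAt (fun w => deriv h (f w)) (deriv (deriv h) (f z) * deriv f z) z :=
      (hh1 (f z)).hasDerivAt.comp z (hf z).hasDerivAt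
    have t2 := (((hh (f z)).hasDerivAt.comp z (hf z).hasDerivAt).mul
      (hf2 z).hasDerivAt).div ((hf1 z).hasDerivAt.pow 2) (pow_ne_zero 2 (hf' z))
    have t := t1.sub t2
    refine t.congr_deriv ?_
    simp only [Function.comp_apply, Pi.mul_apply, Pi.pow_apply, Pi.div_apply]
    have h1 := hf' z
    field_simp [hf' z]
    ring
  have derivB : deriv (fun w => deriv h (f w) - h (f w) * deriv (deriv f) w / (deriv f w) ^ 2)
      = fun w => deriv (deriv h) (f w) * deriv f w
        - deriv h (f w) * deriv (deriv f) w / deriv f w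
        - h (f w) * deriv (deriv (deriv f)) w / (deriv f w) ^ 2
        + 2 * h (f w) * (deriv (deriv f) w) ^ 2 / (deriv f w) ^ 3 :=
    funext fun z => (hAB z).deriv
  -- Third derivative
  have hBC : ∀ z, HasDerivAt
      (fun w => deriv (deriv h) (f w) * deriv f w
        - deriv h (f w) * deriv (deriv f) w / deriv f w
        - h (f w) * deriv (deriv (deriv f)) w / (deriv f w) ^ 2
        + 2 * h (f w) * (deriv (deriv f) w) ^ 2 / (deriv f w) ^ 3)
      (deriv (deriv (deriv h)) (f z) * (deriv f z) ^ 2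
        - 2 * deriv h (f z) * deriv (deriv (deriv f)) z / deriv f z
        + 3 * deriv h (f z) * (deriv (deriv f) z) ^ 2 / (deriv f z) ^ 2
        - h (f z) * deriv (deriv (deriv (deriv f))) z / (deriv f z) ^ 2
        + 6 * h (f z) * deriv (deriv f) z * deriv (deriv (deriv f)) z / (deriv f z) ^ 3
        - 6 * h (f z) * (deriv (deriv f) z) ^ 3 / (deriv f z) ^ 4) z := by
    intro z
    have s1 := ((hh2 (f z)).hasDerivAt.comp z (hf z).hasDerivAt).mul (hf1 z).hasDerivAt
    have s2 := (((hh1 (f z)).hasDerivAt.comp z (hf z).hasDerivAt).mul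
      (hf2 z).hasDerivAt).div (hf1 z).hasDerivAt (hf' z)
    have s3 := (((hh (f z)).hasDerivAt.comp z (hf z).hasDerivAt).mul
      (hf3 z).hasDerivAt).div ((hf1 z).hasDerivAt.pow 2) (pow_ne_zero 2 (hf' z))
    have s4 := ((((hh (f z)).hasDerivAt.comp z (hf z).hasDerivAt).const_mul (2:ℂ)).mul
      ((hf2 z).hasDerivAt.pow 2)).div ((hf1 z).hasDerivAt.pow 3) (pow_ne_zero 3 (hf' z))
    have t := ((s1.sub s2).sub s3).add s4
    refine t.congr_deriv ?_
    simp only [Function.comp_apply, Pi.mul_apply, Pi.pow_apply, Pi.div_apply]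
    have h1 := hf' z
    field_simp
    ring
  -- derivative of the Schwarzian
  have hq : ∀ z, HasDerivAt (schwarzian f)
      (deriv (deriv (deriv (deriv f))) z / deriv f z
        - 4 * deriv (deriv f) z * deriv (deriv (deriv f)) z / (deriv f z) ^ 2
        + 3 * (deriv (deriv f) z) ^ 3 / (deriv f z) ^ 3) z := by
    intro z
    have t1 := (hf3 z).hasDerivAt.div (hf1 z).hasDerivAt (hf' z)
    have t2 := ((((hf2 z).hasDerivAt.div (hf1 z).hasDerivAt (hf' z)).pow 2).const_mul
      ((3:ℂ)/2))
    have t := t1.sub t2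
    have h1 := hf' z
    unfold schwarzian
    refine t.congr_deriv ?_
    simp only [Function.comp_apply, Pi.mul_apply, Pi.pow_apply, Pi.div_apply, Nat.reduceSub, pow_one]
    field_simp [hf' z]
    ring
  intro z
  have h1 := hf' z
  unfold Lambda
  rw [derivA, derivB, (hBC z).deriv, (hq z).deriv, ← hp (f z)]
  simp only [schwarzian]
  field_simp
  ring
end
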